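/- Fix n ≥ 1 and define the sequence R_{m,n} by R_{0,n} = 0, R_{1,n} = n, and R_{m,n} = R_{m-1,n} + n - ⌊(R_{m-1,n} - R_{m-2,n})/3⌋ for m ≥ 2. Then for every m ≥ 1 and every maximal configuration C on the m×n grid, |C| ≤ R_{m,n}. -/

import Mathlib

/-- The m×n grid of lots: rows 1..m (row m southernmost), columns 1..n. -/
def Grid (m n : ℕ) : Finset (ℕ × ℕ) := Finset.Icc 1 m ×ˢ Finset.Icc 1 n

/-- A house at `p` is blocked from sunlight if the lots immediately to its
east `(p.1, p.2+1)`, west `(p.1, p.2-1)` and south `(p.1+1, p.2)` are all occupied.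
(For configurations contained in the grid, membership in `C` automatically forces
these lots to lie in the grid; truncated subtraction sends column 1's western
neighbour to column 0, which is outside the grid.) -/
def Blocked (C : Finset (ℕ × ℕ)) (p : ℕ × ℕ) : Prop :=
  (p.1, p.2 + 1) ∈ C ∧ (p.1, p.2 - 1) ∈ C ∧ (p.1 + 1, p.2) ∈ C

/-- A configuration on the m×n grid is permissible if it lies in the grid and
no house in it is blocked from sunlight. -/
def Permissible (m n : ℕ) (C : Finset (ℕ × ℕ)) : Prop :=
  C ⊆ Grid m n ∧ ∀ p ∈ C, ¬ Blocked C p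

/-- A configuration is maximal if it is permissible and no permissible
configuration strictly contains it. -/
def MaximalConfig (m n : ℕ) (C : Finset (ℕ × ℕ)) : Prop :=
  Permissible m n C ∧ ∀ D : Finset (ℕ × ℕ), Permissible m n D → C ⊆ D → D = C

/-- Number of occupied lots in row `i`. -/
def rowCount (C : Finset (ℕ × ℕ)) (n i : ℕ) : ℕ :=
  ((Finset.Icc 1 n).filter (fun j => (i, j) ∈ C)).card

lemma rowCount_le (C : Finset (ℕ × ℕ)) (n i : ℕ) : rowCount C n i ≤ n := by
  calc rowCount C n i ≤ (Finset.Icc 1 n).card := Finset.card_filter_le _ _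
    _ = n := by simp

lemma card_split (m n : ℕ) (C : Finset (ℕ × ℕ)) (hsub : C ⊆ Grid m n) :
    C.card = ∑ i ∈ Finset.Icc 1 m, rowCount C n i := by
  have h : ∀ p ∈ C, p.1 ∈ Finset.Icc 1 m := fun p hp =>
    (Finset.mem_product.1 (hsub hp)).1
  rw [Finset.card_eq_sum_card_fiberwise h]
  refine Finset.sum_congr rfl fun i _ => ?_
  unfold rowCount
  refine Finset.card_bij (fun p _ => p.2) ?_ ?_ ?_
  · intro p hp
    obtain ⟨hpC, hpi⟩ := Finset.mem_filter.1 hp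
    refine Finset.mem_filter.2 ⟨(Finset.mem_product.1 (hsub hpC)).2, ?_⟩
    have : (i, p.2) = p := by rw [← hpi]
    rwa [this]
  · intro p hp q hq hpq
    have h1 := (Finset.mem_filter.1 hp).2
    have h2 := (Finset.mem_filter.1 hq).2
    exact Prod.ext (h1.trans h2.symm) hpq
  · intro j hj
    obtain ⟨hjI, hjC⟩ := Finset.mem_filter.1 hj
    exact ⟨(i, j), Finset.mem_filter.2 ⟨hjC, rfl⟩, rfl⟩

/-- The key row inequality: `3 rᵢ + rᵢ₊₁ ≤ 3n + 2` for permissible configurations. -/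
lemma row_ineq (m n : ℕ) (C : Finset (ℕ × ℕ)) (hsub : C ⊆ Grid m n)
    (hperm : ∀ p ∈ C, ¬ Blocked C p) (i : ℕ) :
    3 * rowCount C n i + rowCount C n (i + 1) ≤ 3 * n + 2 := by
  set A := (Finset.Icc 1 n).filter (fun j => (i, j) ∈ C) with hA
  set B := (Finset.Icc 1 n).filter (fun j => (i + 1, j) ∈ C) with hB
  set I := A.filter (fun j => (i, j - 1) ∈ C ∧ (i, j + 1) ∈ C) with hI
  have hIB : Disjoint I B := by
    rw [Finset.disjoint_left]
    intro j hjI hjB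
    have hjA := Finset.mem_filter.1 (Finset.filter_subset _ _ hjI)
    have hcond := (Finset.mem_filter.1 hjI).2
    exact hperm (i, j) hjA.2 ⟨hcond.2, hcond.1, (Finset.mem_filter.1 hjB).2⟩
  have h1 : I.card + B.card ≤ n := by
    have hsubIcc : I ∪ B ⊆ Finset.Icc 1 n := by
      intro j hj
      rcases Finset.mem_union.1 hj with h | h
      · exact (Finset.mem_filter.1 (Finset.filter_subset _ _ h)).1
      · exact (Finset.mem_filter.1 h).1
    calc I.card + B.card = (I ∪ B).card := (Finset.card_union_of_disjoint hIB).symm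
      _ ≤ (Finset.Icc 1 n).card := Finset.card_le_card hsubIcc
      _ = n := by simp
  set E := Finset.Icc 1 n \ A with hE
  have hEcard : E.card = n - A.card := by
    rw [hE, Finset.card_sdiff_of_subset (Finset.filter_subset _ _)]
    simp
    rfl
  have h2 : (A \ I).card ≤ 2 * (n - A.card) + 2 := by
    have hsubset : A \ I ⊆ ((E ∪ {0}).image (· + 1)) ∪ ((E ∪ {n + 1}).image (· - 1)) := by
      intro j hj
      obtain ⟨hjA, hjnI⟩ := Finset.mem_sdiff.1 hj
      obtain ⟨hjIcc, hjC⟩ := Finset.mem_filter.1 hjA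
      have hjn : j ≤ n := (Finset.mem_Icc.1 hjIcc).2
      have hj1 : 1 ≤ j := (Finset.mem_Icc.1 hjIcc).1
      have hnb : ¬((i, j - 1) ∈ C ∧ (i, j + 1) ∈ C) := fun h =>
        hjnI (Finset.mem_filter.2 ⟨hjA, h⟩)
      rcases not_and_or.1 hnb with h | h
      · apply Finset.mem_union_left
        apply Finset.mem_image.2
        refine ⟨j - 1, ?_, by omega⟩
        rcases Nat.eq_or_lt_of_le hj1 with h1 | h1
        · exact Finset.mem_union_right _ (by simp [← h1])
        · apply Finset.mem_union_left
          rw [hE, Finset.mem_sdiff]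
          refine ⟨Finset.mem_Icc.2 ⟨by omega, by omega⟩, fun hmem => ?_⟩
          exact h (Finset.mem_filter.1 hmem).2
      · apply Finset.mem_union_right
        apply Finset.mem_image.2
        refine ⟨j + 1, ?_, by omega⟩
        rcases Nat.eq_or_lt_of_le hjn with h1 | h1
        · refine Finset.mem_union_right _ (by simp [h1])
        · apply Finset.mem_union_left
          rw [hE, Finset.mem_sdiff]
          refine ⟨Finset.mem_Icc.2 ⟨by omega, by omega⟩, fun hmem => ?_⟩
          exact h (Finset.mem_filter.1 hmem).2
    have c1 : ((E ∪ {0}).image (· + 1)).card ≤ E.card + 1 :=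
      (Finset.card_image_le).trans ((Finset.card_union_le _ _).trans (by simp))
    have c2 : ((E ∪ {n + 1}).image (· - 1)).card ≤ E.card + 1 :=
      (Finset.card_image_le).trans ((Finset.card_union_le _ _).trans (by simp))
    calc (A \ I).card ≤ _ := Finset.card_le_card hsubset
      _ ≤ ((E ∪ {0}).image (· + 1)).card + ((E ∪ {n + 1}).image (· - 1)).card :=
          Finset.card_union_le _ _
      _ ≤ (E.card + 1) + (E.card + 1) := Nat.add_le_add c1 c2
      _ = 2 * (n - A.card) + 2 := by rw [hEcard]; ring
  have h3 : I.card ≤ A.card := Finset.card_filter_le _ _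
  have h4 : (A \ I).card = A.card - I.card := Finset.card_sdiff_of_subset (Finset.filter_subset _ _)
  have h5 : A.card ≤ n := by
    calc A.card ≤ (Finset.Icc 1 n).card := Finset.card_filter_le _ _
      _ = n := by simp
  have hrA : rowCount C n i = A.card := rfl
  have hrB : rowCount C n (i + 1) = B.card := rfl
  omega

theorem recur_upper_bound (n : ℕ) (hn : 1 ≤ n) (R : ℕ → ℕ)
    (hR0 : R 0 = 0) (hR1 : R 1 = n)
    (hRrec : ∀ k : ℕ, R (k + 2) = R (k + 1) + n - (R (k + 1) - R k) / 3)
    (m : ℕ) (hm : 1 ≤ m) (C : Finset (ℕ × ℕ)) (hC : MaximalConfig m n C) :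
    C.card ≤ R m := by
  obtain ⟨⟨hsub, hperm⟩, -⟩ := hC
  have hrn : ∀ i, rowCount C n i ≤ n := fun i => rowCount_le C n i
  have hrow : ∀ i, 3 * rowCount C n i + rowCount C n (i + 1) ≤ 3 * n + 2 := fun i =>
    row_ineq m n C hsub hperm i
  -- R is monotone with increments ≤ n
  have hd : ∀ k, R k ≤ R (k + 1) ∧ R (k + 1) ≤ R k + n := by
    intro k
    induction k with
    | zero =>
      show R 0 ≤ R 1 ∧ R 1 ≤ R 0 + n
      omega
    | succ j ih =>
      have := hRrec j
      show R (j + 1) ≤ R (j + 2) ∧ R (j + 2) ≤ R (j + 1) + n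
      omega
  -- main induction: partial sums from the south
  have main : ∀ k, k ≤ m → (∑ j ∈ Finset.range k, rowCount C n (m - j)) ≤ R k := by
    intro k
    induction k using Nat.strong_induction_on with
    | _ k ih =>
      match k with
      | 0 => intro _; simp [hR0]
      | 1 =>
        intro _
        have h := hrn m
        rw [Finset.sum_range_one]
        show rowCount C n m ≤ R 1
        omega
      | (j + 2) =>
        intro hjm
        have h1 := ih (j + 1) (by omega) (by omega)
        have h0 := ih j (by omega) (by omega)
        rw [Finset.sum_range_succ] at h1
        rw [Finset.sum_range_succ, Finset.sum_range_succ]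
        have hcons := hrow (m - (j + 1))
        have heq : m - (j + 1) + 1 = m - j := by omega
        rw [heq] at hcons
        have hrec := hRrec j
        have hdj := hd j
        have hnew := hrn (m - (j + 1))
        show _ ≤ R (j + 2)
        omega
  have hsum : C.card = ∑ j ∈ Finset.range m, rowCount C n (m - j) := by
    rw [card_split m n C hsub]
    refine Finset.sum_bij' (fun a _ => m - a) (fun j _ => m - j) ?_ ?_ ?_ ?_ ?_
    · intro a ha
      have := Finset.mem_Icc.1 ha
      rw [Finset.mem_range]
      omega
    · intro j hj
      have := Finset.mem_range.1 hj
      rw [Finset.mem_Icc]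
      omega
    · intro a ha
      have := Finset.mem_Icc.1 ha
      omega
    · intro j hj
      have := Finset.mem_range.1 hj
      omega
    · intro a ha
      have h := Finset.mem_Icc.1 ha
      rw [show m - (m - a) = a by omega]
  rw [hsum]
  exact main m le_rfl
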